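/- If ξ ∈ ε̂_{Ω+1}, then Θ_X(ξ) is not a limit point of X if and only if ξ < Ω and ξ ∈ JUMP(X). -/

import Mathlib

open Ordinal Set

noncomputable section
open scoped Classical

/-- `Ω`, the first uncountable ordinal. -/
def OmegaO : Ordinal := (Cardinal.aleph 1).ord

/-- `ε_{Ω+1}`, the least `ε > Ω` with `ω ^ ε = ε`. -/
def epsOmega : Ordinal := nfp (fun a => Ordinal.omega0 ^ a) (OmegaO + 1)

lemma omega0_le_OmegaO : Ordinal.omega0 ≤ OmegaO := by
  rw [OmegaO, ← Cardinal.ord_aleph0]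
  exact Cardinal.ord_le_ord.2 (Cardinal.aleph0_le_aleph 1)

lemma one_lt_OmegaO : 1 < OmegaO :=
  lt_of_lt_of_le Ordinal.one_lt_omega0 omega0_le_OmegaO

lemma OmegaO_pos : 0 < OmegaO := lt_trans zero_lt_one one_lt_OmegaO

/-- `ξ*`, the maximal coefficient in the `Ω`-normal form of `ξ`. -/
def star (ξ : Ordinal) : Ordinal :=
  if h0 : ξ = 0 then 0
  else if hl : log OmegaO ξ < ξ then
    max (max (star (log OmegaO ξ)) (star (ξ % OmegaO ^ log OmegaO ξ)))
      (ξ / OmegaO ^ log OmegaO ξ)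
  else 0
termination_by ξ
decreasing_by
  · exact hl
  · exact mod_opow_log_lt_self _ h0

/-- The generalized fundamental sequence `ξ[θ]`. -/
def fs (ξ θ : Ordinal) : Ordinal :=
  if h0 : ξ ≤ 1 then 0
  else if hmod : ξ % OmegaO ^ log OmegaO ξ ≠ 0 then
    OmegaO ^ log OmegaO ξ * (ξ / OmegaO ^ log OmegaO ξ) + fs (ξ % OmegaO ^ log OmegaO ξ) θ
  else if Order.IsSuccLimit (ξ / OmegaO ^ log OmegaO ξ) then OmegaO ^ log OmegaO ξ * θ
  else if hβ : ξ / OmegaO ^ log OmegaO ξ = 1 then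
    (if hlog : Order.IsSuccLimit (log OmegaO ξ) then
       (if hll : log OmegaO ξ < ξ then OmegaO ^ fs (log OmegaO ξ) θ else 0)
     else OmegaO ^ Ordinal.pred (log OmegaO ξ) * θ)
  else
    OmegaO ^ log OmegaO ξ * Ordinal.pred (ξ / OmegaO ^ log OmegaO ξ) + fs (OmegaO ^ log OmegaO ξ) θ
termination_by ξ
decreasing_by
  · exact mod_opow_log_lt_self _ (by intro h; exact h0 (by simp [h]))
  · exact hll
  · -- `Ω ^ log Ω ξ < ξ`
    have hξ0 : ξ ≠ 0 := by intro h; exact h0 (by simp [h])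
    have hle : OmegaO ^ log OmegaO ξ ≤ ξ := opow_log_le_self _ hξ0
    have hpos : 0 < OmegaO ^ log OmegaO ξ :=
      opow_pos _ OmegaO_pos
    have hβ0 : 0 < ξ / OmegaO ^ log OmegaO ξ :=
      Ordinal.div_pos (by positivity) |>.2 hle
    have hβ1 : 1 < ξ / OmegaO ^ log OmegaO ξ :=
      lt_of_le_of_ne (Ordinal.one_le_iff_ne_zero.2 hβ0.ne') (Ne.symm hβ)
    calc OmegaO ^ log OmegaO ξ = OmegaO ^ log OmegaO ξ * 1 := (mul_one _).symm
      _ < OmegaO ^ log OmegaO ξ * (ξ / OmegaO ^ log OmegaO ξ) := by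
          first
            | exact mul_lt_mul_of_pos_left hβ1 hpos
            | exact (mul_lt_mul_iff_right₀ hpos).2 hβ1
            | exact (mul_lt_mul_iff_of_pos_left hpos).2 hβ1
      _ ≤ ξ := Ordinal.mul_div_le _ _

/-- The terminal part `τ(ξ)`. -/
def tau (ξ : Ordinal) : Ordinal :=
  if h0 : ξ = 0 then 0
  else if hmod : ξ % OmegaO ^ log OmegaO ξ ≠ 0 then tau (ξ % OmegaO ^ log OmegaO ξ)
  else if Order.IsSuccLimit (ξ / OmegaO ^ log OmegaO ξ) then ξ / OmegaO ^ log OmegaO ξ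
  else if log OmegaO ξ = 0 then 1
  else if hlog : Order.IsSuccLimit (log OmegaO ξ) then
    (if hll : log OmegaO ξ < ξ then tau (log OmegaO ξ) else 0)
  else OmegaO
termination_by ξ
decreasing_by
  · exact mod_opow_log_lt_self _ h0
  · exact hll

/-- The collapsing function `Θ_X`. -/
def ThetaF (X : Set Ordinal) (ξ : Ordinal) : Ordinal :=
  sInf {θ | θ ∈ X ∧ star ξ < θ ∧ ∀ ζ, ζ < ξ → star ζ < θ → ThetaF X ζ < θ}
termination_by ξ
decreasing_by exact by assumption

/-- `Ω_n`: the tower `Ω_0 = 1`, `Ω_{n+1} = Ω ^ Ω_n`. -/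
def OmegaTow : ℕ → Ordinal
  | 0 => 1
  | n + 1 => OmegaO ^ OmegaTow n

/-- `Θ_X(ε_{Ω+1}) = sup_n Θ_X(Ω_n)`. -/
def ThetaEps (X : Set Ordinal) : Ordinal := ⨆ n : ℕ, ThetaF X (OmegaTow n)

/-- `ε̂_{Ω+1}`. -/
def hatEps (X : Set Ordinal) : Set Ordinal :=
  {ξ | ξ < epsOmega ∧ star ξ < ThetaEps X}

/-- `X` is a club in `Ω`. -/
def IsClubBelowOmega (X : Set Ordinal) : Prop :=
  (∀ x ∈ X, x < OmegaO) ∧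
  (∀ a, a < OmegaO → ∃ x ∈ X, a < x) ∧
  (∀ S : Set Ordinal, S ⊆ X → S.Nonempty → sSup S < OmegaO → sSup S ∈ X)

/-- The set of limit points of `X` (below `Ω`). -/
def limitPtsOf (X : Set Ordinal) : Set Ordinal :=
  {x | 0 < x ∧ ∀ y, y < x → ∃ z ∈ X, y < z ∧ z < x}

/-- `FIX(X)`. -/
def FIXs (X : Set Ordinal) : Set Ordinal :=
  {ξ | ξ < epsOmega ∧ star (fs ξ 1) < star ξ ∧ star ξ = tau ξ ∧
    ∃ γ, ξ < γ ∧ γ < epsOmega ∧ star ξ = ThetaF X γ}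

/-- `JUMP(X)`. -/
def JUMPs (X : Set Ordinal) : Set Ordinal :=
  {0} ∪ {ξ | ∃ ζ, ξ = ζ + 1} ∪ FIXs X

/-- `Θ*`. -/
def ThetaStarF (X : Set Ordinal) (ξ : Ordinal) : Ordinal :=
  if ∃ ζ, ξ = ζ + 1 then ThetaF X (Ordinal.pred ξ)
  else if ξ ∈ FIXs X then tau ξ
  else 0

/-- `ξ̌`. -/
def checkF (X : Set Ordinal) (ξ : Ordinal) : Ordinal :=
  if 0 < ThetaStarF X ξ then OmegaO * (ξ / OmegaO) else ξ

/-- `ℙ`, the club of countable additively indecomposable ordinals. -/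
def PP : Set Ordinal := {x | x < OmegaO ∧ ∃ a, x = Ordinal.omega0 ^ a}

/-- `1 + Ord`, the club of nonzero countable ordinals. -/
def oneOrdS : Set Ordinal := {x | 0 < x ∧ x < OmegaO}

/-- `Θ^{(i)}(ξ)`. -/
def ThetaIter (X : Set Ordinal) (ξ : Ordinal) : ℕ → Ordinal
  | 0 => ThetaStarF X ξ
  | n + 1 => ThetaF X (fs (checkF X ξ) (ThetaIter X ξ n))

/-- A Buchholz system of fundamental sequences for `Θ_X`. -/
def IsBuchholz (X : Set Ordinal) (B : Ordinal → ℕ → Ordinal) : Prop :=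
  (∀ n, B 0 n = 0) ∧
  (∀ α ξ n, ξ ∈ hatEps X → OmegaO ≤ ξ → tau ξ < OmegaO → ξ = fs α (tau ξ) →
    B ξ n = fs α (B (tau ξ) n)) ∧
  (∀ ξ n, ξ ∈ hatEps X → 0 < tau (checkF X ξ) → tau (checkF X ξ) < OmegaO →
    B (ThetaF X ξ) n = ThetaF X (B (checkF X ξ) n + ThetaStarF X ξ)) ∧
  (∀ ξ n, ξ ∈ hatEps X → tau (checkF X ξ) = OmegaO →
    B (ThetaF X ξ) n = ThetaIter X ξ n)

/-- The additional clause for the `σ = Θ_{1+Ord}` Buchholz system. -/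
def SigmaExtra (B : Ordinal → ℕ → Ordinal) : Prop :=
  ∀ β n, β < OmegaO → B (ThetaF oneOrdS β) n = β

/-- The additional clauses for the `ϑ = Θ_ℙ` Buchholz system. -/
def VarthetaExtra (B : Ordinal → ℕ → Ordinal) : Prop :=
  (∀ α β n, 0 < β → (∀ α' < α, α' + β < α + β) → B (α + β) n = α + B β n) ∧
  (∀ β n, β < OmegaO → β ∈ JUMPs PP → B (ThetaF PP β) n = ThetaStarF PP β * n)

/-! ### Auxiliary development -/

universe u

section AuxStar

lemma starO_zero : _root_.star (0 : Ordinal.{u}) = 0 := by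
  rw [_root_.star.eq_def]; simp

lemma starO_unfold {ζ : Ordinal.{u}} (h0 : ζ ≠ 0) (hl : log OmegaO ζ < ζ) :
    _root_.star ζ = max (max (_root_.star (log OmegaO ζ)) (_root_.star (ζ % OmegaO ^ log OmegaO ζ)))
      (ζ / OmegaO ^ log OmegaO ζ) := by
  rw [_root_.star.eq_def, dif_neg h0, dif_pos hl]

lemma div_opow_log_lt_OmegaO (ζ : Ordinal.{u}) : ζ / OmegaO ^ log OmegaO ζ < OmegaO := by
  rw [Ordinal.div_lt (opow_ne_zero _ OmegaO_pos.ne')]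
  rw [← opow_succ]
  exact lt_opow_succ_log_self one_lt_OmegaO ζ

lemma starO_lt_OmegaO : ∀ ζ : Ordinal.{u}, _root_.star ζ < OmegaO := by
  intro ζ
  induction ζ using Ordinal.induction with
  | h ζ IH =>
    rcases eq_or_ne ζ 0 with rfl | h0
    · rw [starO_zero]; exact OmegaO_pos
    by_cases hl : log OmegaO ζ < ζ
    · rw [starO_unfold h0 hl]
      exact max_lt (max_lt (IH _ hl) (IH _ (mod_opow_log_lt_self _ h0)))
        (div_opow_log_lt_OmegaO ζ)
    · rw [_root_.star.eq_def, dif_neg h0, dif_neg hl]; exact OmegaO_pos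

lemma starO_eq_self {ζ : Ordinal.{u}} (h0 : 0 < ζ) (hΩ : ζ < OmegaO) : _root_.star ζ = ζ := by
  have hlog : log OmegaO ζ = 0 := Ordinal.log_eq_zero hΩ
  rw [starO_unfold h0.ne' (by rw [hlog]; exact h0)]
  rw [hlog, opow_zero, Ordinal.mod_one, Ordinal.div_one, starO_zero]
  simp

lemma starO_one : _root_.star (1 : Ordinal.{u}) = 1 := starO_eq_self zero_lt_one one_lt_OmegaO

lemma starO_le_self {ζ : Ordinal.{u}} (hΩ : ζ < OmegaO) : _root_.star ζ ≤ ζ := by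
  rcases eq_or_ne ζ 0 with rfl | h0
  · rw [starO_zero]
  · rw [starO_eq_self (pos_iff_ne_zero.2 h0) hΩ]

end AuxStar

section AuxEps

lemma OmegaO_isLimit : Order.IsSuccLimit OmegaO.{u} :=
  Cardinal.isSuccLimit_ord (Cardinal.aleph0_le_aleph 1)

lemma OmegaTow_pos : ∀ n, 0 < OmegaTow.{u} n
  | 0 => zero_lt_one
  | (n+1) => opow_pos _ OmegaO_pos

lemma OmegaTow_lt_succ : ∀ n, OmegaTow.{u} n < OmegaTow.{u} (n + 1) := by
  intro n
  induction n with
  | zero =>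
      show (1 : Ordinal) < OmegaO ^ OmegaTow 0
      rw [show OmegaTow.{u} 0 = 1 from rfl, opow_one]; exact one_lt_OmegaO
  | succ n ih =>
      show OmegaO ^ OmegaTow n < OmegaO ^ OmegaTow (n+1)
      exact (opow_lt_opow_iff_right one_lt_OmegaO).2 ih

lemma lt_opow_self_of_lt_OmegaTow : ∀ n, ∀ ζ < OmegaTow.{u} n, ζ < OmegaO ^ ζ := by
  intro n
  induction n with
  | zero =>
      intro ζ hζ
      rw [show OmegaTow.{u} 0 = 1 from rfl, Ordinal.lt_one_iff_zero] at hζ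
      subst hζ; rw [opow_zero]; exact zero_lt_one
  | succ n ih =>
      intro ζ hζ
      rcases eq_or_ne ζ 0 with rfl | h0
      · rw [opow_zero]; exact zero_lt_one
      have h1 : OmegaO ^ log OmegaO ζ ≤ ζ := opow_log_le_self _ h0
      have h2 : log OmegaO ζ < OmegaTow n := by
        have h' : OmegaO ^ log OmegaO ζ < OmegaO ^ OmegaTow n := lt_of_le_of_lt h1 hζ
        exact (opow_lt_opow_iff_right one_lt_OmegaO).1 h'
      have h3 : log OmegaO ζ < ζ := lt_of_lt_of_le (ih _ h2) h1
      calc ζ < OmegaO ^ (log OmegaO ζ + 1) := by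
              rw [Ordinal.add_one_eq_succ]; exact lt_opow_succ_log_self one_lt_OmegaO ζ
        _ ≤ OmegaO ^ ζ := opow_le_opow_right OmegaO_pos
              (by rw [Ordinal.add_one_eq_succ, Order.succ_le_iff]; exact h3)

lemma le_supTow (n : ℕ) : OmegaTow.{u} n ≤ ⨆ m, OmegaTow.{u} m :=
  Ordinal.le_iSup (fun m => OmegaTow.{u} m) n

lemma lt_supTow {a : Ordinal.{u}} (h : a < ⨆ m, OmegaTow.{u} m) : ∃ n, a < OmegaTow.{u} n :=
  Ordinal.lt_iSup_iff.1 h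

lemma supTow_isLimit : Order.IsSuccLimit (⨆ n, OmegaTow.{u} n) := by
  rw [Ordinal.isSuccLimit_iff, Order.isSuccPrelimit_iff_succ_lt]
  constructor
  · intro h
    have h1 := le_supTow.{u} 0
    rw [h] at h1
    exact absurd h1 (by simpa using (OmegaTow_pos.{u} 0).ne')
  · intro a ha
    obtain ⟨n, hn⟩ := lt_supTow ha
    have h1 : Order.succ a ≤ OmegaTow n := Order.succ_le_iff.2 hn
    exact lt_of_le_of_lt h1 (lt_of_lt_of_le (OmegaTow_lt_succ n) (le_supTow (n+1)))

lemma eps_le_supTow : epsOmega.{u} ≤ ⨆ n, OmegaTow.{u} n := by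
  apply nfp_le_fp (Ordinal.isNormal_opow one_lt_omega0).monotone
  · rw [Ordinal.add_one_eq_succ, Order.succ_le_iff]
    calc OmegaO.{u} = OmegaTow 1 := by
            show OmegaO.{u} = OmegaO ^ OmegaTow 0
            rw [show OmegaTow.{u} 0 = 1 from rfl, opow_one]
      _ < OmegaTow 2 := OmegaTow_lt_succ 1
      _ ≤ _ := le_supTow 2
  · rw [opow_le_of_isSuccLimit omega0_ne_zero supTow_isLimit]
    intro b hb
    obtain ⟨n, hn⟩ := lt_supTow hb
    calc Ordinal.omega0 ^ b ≤ Ordinal.omega0 ^ OmegaTow n := opow_le_opow_right omega0_pos hn.le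
      _ ≤ OmegaO ^ OmegaTow n := opow_le_opow_left _ omega0_le_OmegaO
      _ = OmegaTow (n+1) := rfl
      _ ≤ _ := le_supTow (n+1)

lemma log_lt_self_of_lt_eps {ζ : Ordinal.{u}} (h0 : ζ ≠ 0) (hζ : ζ < epsOmega) :
    log OmegaO ζ < ζ := by
  obtain ⟨n, hn⟩ := lt_supTow (lt_of_lt_of_le hζ eps_le_supTow)
  have h1 : log OmegaO ζ < OmegaTow n := lt_of_le_of_lt (Ordinal.log_le_self _ _) hn
  exact lt_of_lt_of_le (lt_opow_self_of_lt_OmegaTow n _ h1) (opow_log_le_self _ h0)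

end AuxEps

section AuxCountable

lemma sSup_lt_OmegaO {S : Set Ordinal.{u}} (hc : S.Countable) (hS : ∀ x ∈ S, x < OmegaO) :
    sSup S < OmegaO := by
  rcases S.eq_empty_or_nonempty with rfl | hne
  · rw [csSup_empty]; exact OmegaO_pos
  · obtain ⟨f, rfl⟩ := hc.exists_eq_range hne
    have h1 : sSup (Set.range f) = ⨆ n, f n := rfl
    rw [h1, OmegaO]
    apply Ordinal.iSup_lt_ord_lift
    · rw [Cardinal.isRegular_aleph_one.cof_eq, Cardinal.mk_nat, Cardinal.lift_aleph0]
      exact Cardinal.aleph0_lt_aleph_one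
    · intro n; exact hS _ ⟨n, rfl⟩

lemma countable_Iio_of_lt_OmegaO {c : Ordinal.{u}} (hc : c < OmegaO) :
    (Set.Iio c).Countable := by
  rw [Cardinal.countable_iff_lt_aleph_one, Ordinal.mk_Iio_ordinal]
  have h1 : c.card < Cardinal.aleph 1 := Cardinal.lt_ord.1 hc
  have h2 := Cardinal.lift_lt.{u, u+1}.2 h1
  rwa [Cardinal.lift_aleph, Ordinal.lift_one] at h2

inductive NTx : Type where
  | leaf : NTx
  | node : NTx → ℕ → NTx → NTx

def NTx.toN : NTx → ℕ
  | .leaf => 0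
  | .node l d m => Nat.pair (Nat.pair l.toN m.toN) d + 1

theorem NTx.toN_inj : ∀ a b : NTx, a.toN = b.toN → a = b := by
  intro a
  induction a with
  | leaf =>
      intro b h
      cases b with
      | leaf => rfl
      | node l d m => simp [NTx.toN] at h
  | node l d m ihl ihm =>
      intro b h
      cases b with
      | leaf => simp [NTx.toN] at h
      | node l' d' m' =>
        simp only [NTx.toN, add_left_inj] at h
        obtain ⟨h1, h2⟩ := Nat.pair_eq_pair.1 h
        obtain ⟨h3, h4⟩ := Nat.pair_eq_pair.1 h1
        rw [ihl _ h3, ihm _ h4, h2]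

def encNT (g : Ordinal.{u} → ℕ) (ζ : Ordinal.{u}) : NTx :=
  if h0 : ζ = 0 then .leaf
  else if hl : log OmegaO ζ < ζ then
    .node (encNT g (log OmegaO ζ)) (g (ζ / OmegaO ^ log OmegaO ζ))
      (encNT g (ζ % OmegaO ^ log OmegaO ζ))
  else .leaf
termination_by ζ
decreasing_by
  · exact hl
  · exact mod_opow_log_lt_self _ h0

lemma encNT_zero (g : Ordinal.{u} → ℕ) : encNT g 0 = .leaf := by
  rw [encNT.eq_def]; simp

lemma encNT_pos (g : Ordinal.{u} → ℕ) {ζ : Ordinal.{u}} (h0 : ζ ≠ 0) (hl : log OmegaO ζ < ζ) :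
    encNT g ζ = .node (encNT g (log OmegaO ζ)) (g (ζ / OmegaO ^ log OmegaO ζ))
      (encNT g (ζ % OmegaO ^ log OmegaO ζ)) := by
  rw [encNT.eq_def, dif_neg h0, dif_pos hl]

lemma countable_star_lt {c : Ordinal.{u}} (hc : c < OmegaO) :
    {ζ : Ordinal.{u} | ζ < epsOmega ∧ _root_.star ζ < c}.Countable := by
  classical
  obtain ⟨f, hf⟩ := Set.countable_iff_exists_injective.1 (countable_Iio_of_lt_OmegaO hc)
  set g : Ordinal.{u} → ℕ := fun x => if h : x < c then f ⟨x, h⟩ else 0 with hg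
  set A := {ζ : Ordinal.{u} | ζ < epsOmega ∧ _root_.star ζ < c} with hA
  have hmemrec : ∀ ζ ∈ A, ζ ≠ 0 →
      log OmegaO ζ < ζ ∧ log OmegaO ζ ∈ A ∧ (ζ % OmegaO ^ log OmegaO ζ) ∈ A ∧
        ζ / OmegaO ^ log OmegaO ζ < c := by
    intro ζ hζ h0
    have hl : log OmegaO ζ < ζ := log_lt_self_of_lt_eps h0 hζ.1
    have hst := starO_unfold h0 hl
    have hs1 : _root_.star (log OmegaO ζ) ≤ _root_.star ζ := by
      rw [hst]; exact le_max_of_le_left (le_max_left _ _)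
    have hs2 : _root_.star (ζ % OmegaO ^ log OmegaO ζ) ≤ _root_.star ζ := by
      rw [hst]; exact le_max_of_le_left (le_max_right _ _)
    have hs3 : ζ / OmegaO ^ log OmegaO ζ ≤ _root_.star ζ := by
      rw [hst]; exact le_max_right _ _
    exact ⟨hl, ⟨lt_trans hl hζ.1, lt_of_le_of_lt hs1 hζ.2⟩,
      ⟨lt_trans (mod_opow_log_lt_self _ h0) hζ.1, lt_of_le_of_lt hs2 hζ.2⟩,
      lt_of_le_of_lt hs3 hζ.2⟩
  have key : ∀ ζ1, ζ1 ∈ A → ∀ ζ2 ∈ A, encNT g ζ1 = encNT g ζ2 → ζ1 = ζ2 := by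
    intro ζ1
    induction ζ1 using Ordinal.induction with
    | h ζ1 IH =>
      intro h1 ζ2 h2 he
      rcases eq_or_ne ζ1 0 with rfl | h10
      · rcases eq_or_ne ζ2 0 with rfl | h20
        · rfl
        · obtain ⟨hl2, _, _, _⟩ := hmemrec ζ2 h2 h20
          rw [encNT_zero, encNT_pos g h20 hl2] at he
          exact absurd he (by simp)
      · obtain ⟨hl1, hlog1, hmod1, hdiv1⟩ := hmemrec ζ1 h1 h10
        rcases eq_or_ne ζ2 0 with rfl | h20
        · rw [encNT_zero, encNT_pos g h10 hl1] at he
          exact absurd he (by simp)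
        · obtain ⟨hl2, hlog2, hmod2, hdiv2⟩ := hmemrec ζ2 h2 h20
          rw [encNT_pos g h10 hl1, encNT_pos g h20 hl2] at he
          injection he with e1 e2 e3
          have hlogeq : log OmegaO ζ1 = log OmegaO ζ2 := IH _ hl1 hlog1 _ hlog2 e1
          have hmodeq : ζ1 % OmegaO ^ log OmegaO ζ1 = ζ2 % OmegaO ^ log OmegaO ζ2 :=
            IH _ (mod_opow_log_lt_self _ h10) hmod1 _ hmod2 e3
          have hgval : ∀ x (hx : x < c), g x = f ⟨x, hx⟩ := fun x hx => dif_pos hx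
          have hdiveq : ζ1 / OmegaO ^ log OmegaO ζ1 = ζ2 / OmegaO ^ log OmegaO ζ2 := by
            have e2' : g (ζ1 / OmegaO ^ log OmegaO ζ1) = g (ζ2 / OmegaO ^ log OmegaO ζ2) := e2
            rw [hgval _ hdiv1, hgval _ hdiv2] at e2'
            exact Subtype.ext_iff.1 (hf e2')
          calc ζ1 = OmegaO ^ log OmegaO ζ1 * (ζ1 / OmegaO ^ log OmegaO ζ1)
                      + ζ1 % OmegaO ^ log OmegaO ζ1 := (Ordinal.div_add_mod _ _).symm
            _ = OmegaO ^ log OmegaO ζ2 * (ζ2 / OmegaO ^ log OmegaO ζ2)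
                      + ζ2 % OmegaO ^ log OmegaO ζ2 := by rw [hdiveq, hmodeq, hlogeq]
            _ = ζ2 := Ordinal.div_add_mod _ _
  rw [Set.countable_iff_exists_injOn]
  exact ⟨fun ζ => (encNT g ζ).toN, fun a ha b hb hab => key a ha b hb (NTx.toN_inj _ _ hab)⟩

end AuxCountable

section AuxTheta

variable {X : Set Ordinal.{u}}

/-- The defining set of `Θ_X(ξ)`. -/
def Tset (X : Set Ordinal.{u}) (ξ : Ordinal.{u}) : Set Ordinal.{u} :=
  {θ | θ ∈ X ∧ _root_.star ξ < θ ∧ ∀ ζ, ζ < ξ → _root_.star ζ < θ → ThetaF X ζ < θ}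

lemma ThetaF_eq (X : Set Ordinal.{u}) (ξ : Ordinal.{u}) : ThetaF X ξ = sInf (Tset X ξ) := by
  rw [ThetaF]; rfl

lemma Tset_nonempty (hX : IsClubBelowOmega X) :
    ∀ ξ : Ordinal.{u}, ξ < epsOmega → (Tset X ξ).Nonempty := by
  intro ξ
  induction ξ using Ordinal.induction with
  | h ξ IH =>
    intro hξ
    classical
    set pick : Ordinal.{u} → Ordinal.{u} := fun a => sInf {x | x ∈ X ∧ a < x} with hpick
    have pick_spec : ∀ a, a < OmegaO → pick a ∈ X ∧ a < pick a := by
      intro a ha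
      have hne : {x | x ∈ X ∧ a < x}.Nonempty := by
        obtain ⟨x, hx1, hx2⟩ := hX.2.1 a ha
        exact ⟨x, hx1, hx2⟩
      exact csInf_mem hne
    have theta_lt_Om : ∀ ζ, ζ < ξ → ThetaF X ζ < OmegaO := by
      intro ζ hζ
      have hmem : ThetaF X ζ ∈ Tset X ζ := by
        rw [ThetaF_eq]; exact csInf_mem (IH ζ hζ (hζ.trans hξ))
      exact hX.1 _ hmem.1
    set Ssup : Ordinal.{u} → Ordinal.{u} :=
      fun t => sSup (ThetaF X '' {ζ | ζ < ξ ∧ _root_.star ζ < t}) with hSsup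
    have Ssup_lt : ∀ t, t < OmegaO → Ssup t < OmegaO := by
      intro t ht
      apply sSup_lt_OmegaO
      · apply Set.Countable.image
        apply (countable_star_lt ht).mono
        intro ζ hζ
        exact ⟨hζ.1.trans hξ, hζ.2⟩
      · rintro x ⟨ζ, hζ, rfl⟩
        exact theta_lt_Om ζ hζ.1
    set θs : ℕ → Ordinal.{u} :=
      fun k => Nat.rec (pick (_root_.star ξ)) (fun _ t => pick (max t (Ssup t))) k with hθs
    have h0 : θs 0 ∈ X ∧ _root_.star ξ < θs 0 := pick_spec _ (starO_lt_OmegaO ξ)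
    have hXmem : ∀ k, θs k ∈ X := by
      intro k
      induction k with
      | zero => exact h0.1
      | succ k ih =>
        have hkΩ : θs k < OmegaO := hX.1 _ ih
        exact (pick_spec _ (max_lt hkΩ (Ssup_lt _ hkΩ))).1
    have hstep : ∀ k, max (θs k) (Ssup (θs k)) < θs (k+1) := by
      intro k
      have hkΩ : θs k < OmegaO := hX.1 _ (hXmem k)
      exact (pick_spec _ (max_lt hkΩ (Ssup_lt _ hkΩ))).2
    have hmono : ∀ k, θs k < θs (k+1) :=
      fun k => lt_of_le_of_lt (le_max_left _ _) (hstep k)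
    have hbdd : BddAbove (Set.range θs) :=
      ⟨OmegaO, by rintro x ⟨k, rfl⟩; exact (hX.1 _ (hXmem k)).le⟩
    set T := sSup (Set.range θs) with hT
    have hTle : ∀ k, θs k ≤ T := fun k => le_csSup hbdd ⟨k, rfl⟩
    have hTΩ : T < OmegaO := by
      apply sSup_lt_OmegaO (Set.countable_range θs)
      rintro x ⟨k, rfl⟩
      exact hX.1 _ (hXmem k)
    have hTX : T ∈ X := by
      exact hX.2.2 _ (by rintro x ⟨k, rfl⟩; exact hXmem k) ⟨θs 0, ⟨0, rfl⟩⟩ hTΩ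
    refine ⟨T, hTX, lt_of_lt_of_le h0.2 (hTle 0), ?_⟩
    intro ζ hζξ hζT
    obtain ⟨x, ⟨k, rfl⟩, hk⟩ := (lt_csSup_iff hbdd ⟨θs 0, 0, rfl⟩).1 hζT
    have h1 : ThetaF X ζ ≤ Ssup (θs k) := by
      apply le_csSup
      · exact ⟨OmegaO, by rintro x ⟨ζ', hζ', rfl⟩; exact (theta_lt_Om ζ' hζ'.1).le⟩
      · exact ⟨ζ, ⟨hζξ, hk⟩, rfl⟩
    calc ThetaF X ζ ≤ Ssup (θs k) := h1
      _ ≤ max (θs k) (Ssup (θs k)) := le_max_right _ _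
      _ < θs (k+1) := hstep k
      _ ≤ T := hTle (k+1)

lemma theta_mem (hX : IsClubBelowOmega X) {ξ : Ordinal.{u}} (hξ : ξ < epsOmega) : ThetaF X ξ ∈ Tset X ξ := by
  rw [ThetaF_eq]; exact csInf_mem (Tset_nonempty hX ξ hξ)

lemma theta_le {ξ z : Ordinal.{u}} (hz : z ∈ Tset X ξ) : ThetaF X ξ ≤ z := by
  rw [ThetaF_eq]; exact csInf_le' hz

lemma theta_lt_OmegaO (hX : IsClubBelowOmega X) {ξ : Ordinal.{u}} (hξ : ξ < epsOmega) : ThetaF X ξ < OmegaO :=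
  hX.1 _ (theta_mem hX hξ).1

lemma star_lt_theta (hX : IsClubBelowOmega X) {ξ : Ordinal.{u}} (hξ : ξ < epsOmega) : _root_.star ξ < ThetaF X ξ :=
  (theta_mem hX hξ).2.1

lemma Omega_lt_eps : OmegaO.{u} < epsOmega.{u} := by
  have h1 : OmegaO.{u} + 1 ≤ epsOmega := Ordinal.le_nfp _ _
  calc OmegaO.{u} < OmegaO + 1 := lt_add_one _
    _ ≤ _ := h1

lemma theta_pos (hX : IsClubBelowOmega X) (h0X : 0 ∉ X) {ξ : Ordinal.{u}} (hξ : ξ < epsOmega) : 0 < ThetaF X ξ := by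
  have h := (theta_mem hX hξ).1
  rcases eq_or_ne (ThetaF X ξ) 0 with h' | h'
  · exact absurd (h' ▸ h) h0X
  · exact pos_iff_ne_zero.2 h'

lemma self_lt_theta (hX : IsClubBelowOmega X) (h0X : 0 ∉ X) {ξ : Ordinal.{u}} (hξΩ : ξ < OmegaO) : ξ < ThetaF X ξ := by
  have hξe : ξ < epsOmega := hξΩ.trans Omega_lt_eps
  rcases eq_or_ne ξ 0 with rfl | h0
  · exact theta_pos hX h0X hξe
  · have := star_lt_theta hX hξe
    rwa [starO_eq_self (pos_iff_ne_zero.2 h0) hξΩ] at this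

lemma theta_mono (hX : IsClubBelowOmega X) (h0X : 0 ∉ X) {ζ ζ' : Ordinal.{u}} (h : ζ < ζ') (hΩ : ζ' < OmegaO) :
    ThetaF X ζ < ThetaF X ζ' := by
  have hζ'e : ζ' < epsOmega := hΩ.trans Omega_lt_eps
  apply (theta_mem hX hζ'e).2.2 ζ h
  calc _root_.star ζ ≤ ζ := starO_le_self (h.trans hΩ)
    _ < ζ' := h
    _ < ThetaF X ζ' := self_lt_theta hX h0X hΩ

end AuxTheta

section AuxEps2

lemma omega0_opow_lt_OmegaO : ∀ x : Ordinal.{u}, x < OmegaO → Ordinal.omega0 ^ x < OmegaO := by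
  intro x
  induction x using Ordinal.limitRecOn with
  | zero => intro _; rw [opow_zero]; exact one_lt_OmegaO
  | add_one x ih =>
      intro hx
      have hx' : x < OmegaO := lt_trans (lt_add_one x) hx
      have h1 := ih hx'
      rw [OmegaO, Cardinal.lt_ord] at h1 ⊢
      rw [opow_add_one, Ordinal.card_mul]
      apply Cardinal.mul_lt_of_lt (Cardinal.aleph0_le_aleph 1) h1
      rw [Ordinal.card_omega0]
      exact Cardinal.aleph0_lt_aleph_one
  | limit x hlim ih =>
      intro hx
      have hsub : ((Ordinal.omega0 ^ ·) '' Set.Iio x).Countable :=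
        (countable_Iio_of_lt_OmegaO hx).image _
      have hlt : ∀ z ∈ (Ordinal.omega0 ^ ·) '' Set.Iio x, z < OmegaO := by
        rintro z ⟨y, hy, rfl⟩
        exact ih y hy (hy.trans hx)
      have hb : BddAbove ((Ordinal.omega0 ^ ·) '' Set.Iio x) :=
        ⟨OmegaO, fun z hz => (hlt z hz).le⟩
      have h1 : Ordinal.omega0 ^ x ≤ sSup ((Ordinal.omega0 ^ ·) '' Set.Iio x) := by
        rw [opow_le_of_isSuccLimit omega0_ne_zero hlim]
        intro b hb'
        exact le_csSup hb ⟨b, hb', rfl⟩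
      exact lt_of_le_of_lt h1 (sSup_lt_OmegaO hsub hlt)

lemma omega0_opow_OmegaO : Ordinal.omega0 ^ OmegaO.{u} = OmegaO := by
  apply le_antisymm
  · rw [opow_le_of_isSuccLimit omega0_ne_zero OmegaO_isLimit]
    intro b hb
    exact (omega0_opow_lt_OmegaO b hb).le
  · exact right_le_opow _ one_lt_omega0

lemma omega0_opow_eps : Ordinal.omega0 ^ epsOmega.{u} = epsOmega := by
  rw [epsOmega]
  exact Ordinal.nfp_fp (Ordinal.isNormal_opow one_lt_omega0) _

lemma add_eps : OmegaO.{u} + epsOmega = epsOmega := by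
  apply Ordinal.add_absorp (b := epsOmega)
  · rw [omega0_opow_eps]; exact Omega_lt_eps
  · rw [omega0_opow_eps]

lemma mul_eps : OmegaO.{u} * epsOmega = epsOmega := by
  conv_lhs => rw [← omega0_opow_OmegaO, ← omega0_opow_eps]
  rw [← opow_add, add_eps, omega0_opow_eps]

lemma OmegaO_opow_eps : OmegaO.{u} ^ epsOmega = epsOmega := by
  rw [← omega0_opow_OmegaO, ← opow_mul, mul_eps, omega0_opow_eps]

lemma OmegaTow_le_eps : ∀ n, OmegaTow.{u} n ≤ epsOmega := by
  intro n
  induction n with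
  | zero => exact (one_lt_OmegaO.trans Omega_lt_eps).le
  | succ n ih =>
      show OmegaO ^ OmegaTow n ≤ epsOmega
      calc OmegaO ^ OmegaTow n ≤ OmegaO ^ epsOmega := opow_le_opow_right OmegaO_pos ih
        _ = epsOmega := OmegaO_opow_eps

lemma OmegaTow_lt_eps (n : ℕ) : OmegaTow.{u} n < epsOmega :=
  lt_of_lt_of_le (OmegaTow_lt_succ n) (OmegaTow_le_eps (n+1))

lemma star_OmegaTow : ∀ n, _root_.star (OmegaTow.{u} n) = 1 := by
  intro n
  induction n with
  | zero => exact starO_one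
  | succ n ih =>
      have h0 : OmegaTow.{u} (n+1) ≠ 0 := (OmegaTow_pos (n+1)).ne'
      have hlog : log OmegaO (OmegaTow.{u} (n+1)) = OmegaTow n := by
        show log OmegaO (OmegaO ^ OmegaTow n) = OmegaTow n
        exact Ordinal.log_opow one_lt_OmegaO _
      have hl : log OmegaO (OmegaTow.{u} (n+1)) < OmegaTow (n+1) := by
        rw [hlog]; exact OmegaTow_lt_succ n
      rw [starO_unfold h0 hl, hlog,
        show OmegaTow.{u} (n+1) = OmegaO ^ OmegaTow n from rfl,
        Ordinal.mod_self, Ordinal.div_self (opow_ne_zero _ OmegaO_pos.ne'), starO_zero, ih]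
      simp

lemma fs_limit {ξ : Ordinal.{u}} (hlim : Order.IsSuccLimit ξ) (hΩ : ξ < OmegaO) : fs ξ 1 = 1 := by
  have h1 : ¬ ξ ≤ 1 := not_le.2 (lt_of_lt_of_le one_lt_omega0 (omega0_le_of_isSuccLimit hlim))
  have hlog : log OmegaO ξ = 0 := Ordinal.log_eq_zero hΩ
  rw [fs.eq_def, dif_neg h1]
  simp only [hlog, opow_zero, Ordinal.mod_one, Ordinal.div_one]
  rw [dif_neg (by simp), if_pos hlim, one_mul]

lemma tau_limit {ξ : Ordinal.{u}} (hlim : Order.IsSuccLimit ξ) (hΩ : ξ < OmegaO) : tau ξ = ξ := by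
  have hlog : log OmegaO ξ = 0 := Ordinal.log_eq_zero hΩ
  rw [tau.eq_def, dif_neg hlim.pos.ne']
  simp only [hlog, opow_zero, Ordinal.mod_one, Ordinal.div_one]
  rw [dif_neg (by simp), if_pos hlim]

end AuxEps2

section AuxCases

variable {X : Set Ordinal.{u}}

lemma notlim_zero (hX : IsClubBelowOmega X) : ThetaF X 0 ∉ limitPtsOf X := by
  intro hm
  obtain ⟨z, hzX, hz0, hzlt⟩ := hm.2 0 hm.1
  have hz : z ∈ Tset X 0 :=
    ⟨hzX, by rw [starO_zero]; exact hz0, fun ζ hζ _ => absurd hζ (not_lt_of_ge (zero_le (a := ζ)))⟩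
  exact absurd (theta_le hz) (not_le.2 hzlt)

lemma notlim_succ (hX : IsClubBelowOmega X) (h0X : 0 ∉ X) (ζ : Ordinal.{u})
    (hΩ : ζ + 1 < OmegaO) : ThetaF X (ζ + 1) ∉ limitPtsOf X := by
  have hζΩ : ζ < OmegaO := (lt_add_one ζ).trans hΩ
  intro hm
  have hth : ThetaF X ζ < ThetaF X (ζ + 1) := theta_mono hX h0X (lt_add_one ζ) hΩ
  obtain ⟨z, hzX, hz1, hz2⟩ := hm.2 (ThetaF X ζ) hth
  have hzT : z ∈ Tset X (ζ + 1) := by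
    refine ⟨hzX, ?_, ?_⟩
    · rw [starO_eq_self (lt_of_le_of_lt (zero_le (a := ζ)) (lt_add_one ζ)) hΩ]
      have h1 : ζ < ThetaF X ζ := self_lt_theta hX h0X hζΩ
      have h2 : ζ + 1 ≤ ThetaF X ζ := by
        rw [Ordinal.add_one_eq_succ]; exact Order.succ_le_iff.2 h1
      exact lt_of_le_of_lt h2 hz1
    · intro ζ' hζ' _
      have hle : ζ' ≤ ζ := by
        rw [Ordinal.add_one_eq_succ] at hζ'; exact Order.lt_succ_iff.1 hζ'
      rcases lt_or_eq_of_le hle with h | h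
      · exact lt_trans (theta_mono hX h0X h hζΩ) hz1
      · rw [h]; exact hz1
  exact absurd (theta_le hzT) (not_le.2 hz2)

lemma notlim_fix (hX : IsClubBelowOmega X) (h0X : 0 ∉ X) {ξ : Ordinal.{u}}
    (hf : ξ ∈ FIXs X) (hΩ : ξ < OmegaO) : ThetaF X ξ ∉ limitPtsOf X := by
  obtain ⟨hξe, hfs, htau, γ, hγ1, hγ2, hγ3⟩ := hf
  have hξ0 : ξ ≠ 0 := by
    rintro rfl
    rw [starO_zero] at hfs
    exact not_lt_of_ge zero_le hfs
  have hst : _root_.star ξ = ξ := starO_eq_self (pos_iff_ne_zero.2 hξ0) hΩ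
  intro hm
  have hξθ : ξ < ThetaF X ξ := self_lt_theta hX h0X hΩ
  obtain ⟨z, hzX, hz1, hz2⟩ := hm.2 ξ hξθ
  have hzT : z ∈ Tset X ξ := by
    refine ⟨hzX, by rw [hst]; exact hz1, ?_⟩
    intro ζ hζ hζs
    have hγmem := theta_mem (X := X) hX hγ2
    have h1 : ThetaF X ζ < ThetaF X γ := by
      apply hγmem.2.2 ζ (hζ.trans hγ1)
      rw [← hγ3, hst]
      exact lt_of_le_of_lt (starO_le_self (hζ.trans hΩ)) hζ
    rw [← hγ3, hst] at h1
    exact h1.trans hz1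
  exact absurd (theta_le hzT) (not_le.2 hz2)

lemma lim_ge_Omega (hX : IsClubBelowOmega X) (h0X : 0 ∉ X) {ξ : Ordinal.{u}}
    (hΩ : OmegaO ≤ ξ) (hξe : ξ < epsOmega) : ThetaF X ξ ∈ limitPtsOf X := by
  refine ⟨theta_pos hX h0X hξe, ?_⟩
  intro y hy
  have hyΩ : y < OmegaO := hy.trans (theta_lt_OmegaO hX hξe)
  have hyξ : y < ξ := hyΩ.trans_le hΩ
  have hstar : _root_.star y < ThetaF X ξ := lt_of_le_of_lt (starO_le_self hyΩ) hy
  exact ⟨ThetaF X y, (theta_mem hX (hyΩ.trans Omega_lt_eps)).1, self_lt_theta hX h0X hyΩ,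
    (theta_mem hX hξe).2.2 y hyξ hstar⟩

lemma lim_limit (hX : IsClubBelowOmega X) (h0X : 0 ∉ X) {ξ : Ordinal.{u}}
    (hΩ : ξ < OmegaO) (hJ : ξ ∉ JUMPs X) (hTE : _root_.star ξ < ThetaEps X) :
    ThetaF X ξ ∈ limitPtsOf X := by
  have hξ0 : ξ ≠ 0 := by
    rintro rfl
    exact hJ (Or.inl (Or.inl rfl))
  have hnsucc : ¬∃ a : Ordinal.{u}, ξ = Order.succ a := by
    rintro ⟨a, rfl⟩
    exact hJ (Or.inl (Or.inr ⟨a, (Ordinal.add_one_eq_succ a).symm⟩))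
  have hlim : Order.IsSuccLimit ξ :=
    ((Ordinal.zero_or_succ_or_isSuccLimit ξ).resolve_left hξ0).resolve_left
      (fun ⟨a, ha⟩ => hnsucc ⟨a, ha.symm⟩)
  have hfix : ξ ∉ FIXs X := fun h => hJ (Or.inr h)
  have hξe : ξ < epsOmega := hΩ.trans Omega_lt_eps
  have h1ξ : 1 < ξ := lt_of_lt_of_le one_lt_omega0 (omega0_le_of_isSuccLimit hlim)
  have hst : _root_.star ξ = ξ := starO_eq_self hlim.pos hΩ
  have heps : ∀ ζ, ζ < ξ → ζ < epsOmega := fun ζ hζ => (hζ.trans hΩ).trans Omega_lt_eps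
  set s := sSup (ThetaF X '' Set.Iio ξ) with hs
  have hbdd : BddAbove (ThetaF X '' Set.Iio ξ) := by
    refine ⟨OmegaO, ?_⟩
    rintro x ⟨ζ, hζ, rfl⟩
    exact (theta_lt_OmegaO hX (heps ζ hζ)).le
  have hmem0 : ThetaF X 0 ∈ ThetaF X '' Set.Iio ξ := ⟨0, hlim.pos, rfl⟩
  have himgsub : ∀ z ∈ ThetaF X '' Set.Iio ξ, z ∈ X := by
    rintro z ⟨ζ, hζ, rfl⟩
    exact (theta_mem hX (heps ζ hζ)).1
  have hsΩ : s < OmegaO := by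
    apply sSup_lt_OmegaO ((countable_Iio_of_lt_OmegaO hΩ).image _)
    rintro z ⟨ζ, hζ, rfl⟩
    exact theta_lt_OmegaO hX (heps ζ hζ)
  have hthlt : ∀ ζ, ζ < ξ → ThetaF X ζ < ThetaF X ξ := fun ζ hζ => theta_mono hX h0X hζ hΩ
  have hstep : ∀ ζ, ζ < ξ → ThetaF X ζ < s := by
    intro ζ hζ
    have hsucc : ζ + 1 < ξ := by
      rw [Ordinal.add_one_eq_succ]; exact hlim.succ_lt hζ
    calc ThetaF X ζ < ThetaF X (ζ + 1) := theta_mono hX h0X (lt_add_one ζ) (hsucc.trans hΩ)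
      _ ≤ s := le_csSup hbdd ⟨ζ + 1, hsucc, rfl⟩
  have hsle : s ≤ ThetaF X ξ := by
    apply csSup_le ⟨_, hmem0⟩
    rintro z ⟨ζ, hζ, rfl⟩
    exact (hthlt ζ hζ).le
  rcases eq_or_lt_of_le hsle with heq | hlt
  · refine ⟨theta_pos hX h0X hξe, ?_⟩
    intro y hy
    rw [← heq] at hy
    obtain ⟨z, hzmem, hyz⟩ := (lt_csSup_iff hbdd ⟨_, hmem0⟩).1 hy
    obtain ⟨ζ, hζ, rfl⟩ := hzmem
    exact ⟨_, himgsub _ ⟨ζ, hζ, rfl⟩, hyz, hthlt ζ hζ⟩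
  · exfalso
    have hsge : ξ ≤ s := by
      apply le_of_forall_lt
      intro cc hcc
      exact lt_trans (self_lt_theta hX h0X (hcc.trans hΩ)) (hstep cc hcc)
    have hseq : s = ξ := by
      by_contra hne
      have hgt : ξ < s := lt_of_le_of_ne hsge (fun h => hne h.symm)
      have hsX : s ∈ X := hX.2.2 _ himgsub ⟨_, hmem0⟩ hsΩ
      have hsT : s ∈ Tset X ξ := ⟨hsX, by rw [hst]; exact hgt, fun ζ hζ _ => hstep ζ hζ⟩
      exact absurd (theta_le hsT) (not_le.2 hlt)
    have hξX : ξ ∈ X := by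
      rw [← hseq]
      exact hX.2.2 _ himgsub ⟨_, hmem0⟩ hsΩ
    have hthltξ : ∀ ζ, ζ < ξ → ThetaF X ζ < ξ := by
      intro ζ hζ
      rw [← hseq]
      exact hstep ζ hζ
    obtain ⟨n, hn⟩ : ∃ n, ξ < ThetaF X (OmegaTow n) := by
      rw [ThetaEps, hst] at hTE
      exact Ordinal.lt_iSup_iff.1 hTE
    set G := {γ : Ordinal.{u} | γ < epsOmega ∧ _root_.star γ < ξ ∧ ξ ≤ ThetaF X γ} with hG
    have hGne : G.Nonempty :=
      ⟨OmegaTow n, OmegaTow_lt_eps n, by rw [star_OmegaTow]; exact h1ξ, hn.le⟩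
    have hγ0 : sInf G ∈ G := csInf_mem hGne
    set γ0 := sInf G with hγ0def
    have hTγ : ξ ∈ Tset X γ0 := by
      refine ⟨hξX, hγ0.2.1, ?_⟩
      intro ζ hζ hζs
      by_contra hle
      push_neg at hle
      have hζG : ζ ∈ G := ⟨hζ.trans hγ0.1, hζs, hle⟩
      exact absurd (csInf_le' hζG) (not_le.2 hζ)
    have hθγ : ThetaF X γ0 = ξ := le_antisymm (theta_le hTγ) hγ0.2.2
    have hγgt : ξ < γ0 := by
      rcases lt_trichotomy γ0 ξ with h | h | h
      · exact absurd (hθγ ▸ hthltξ γ0 h) (lt_irrefl ξ)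
      · exfalso
        rw [h] at hθγ
        have h2 := self_lt_theta hX h0X hΩ
        rw [hθγ] at h2
        exact lt_irrefl ξ h2
      · exact h
    apply hfix
    refine ⟨hξe, ?_, ?_, γ0, hγgt, hγ0.1, ?_⟩
    · rw [fs_limit hlim hΩ, starO_one, hst]; exact h1ξ
    · rw [hst, tau_limit hlim hΩ]
    · rw [hst, hθγ]

end AuxCases

/-- `Θ_X(ξ)` is not a limit point of `X` iff `ξ < Ω` and `ξ ∈ JUMP(X)`. -/
theorem stmt12 (X : Set Ordinal) (hX : IsClubBelowOmega X) (h0X : 0 ∉ X)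
    (ξ : Ordinal) (h : ξ ∈ hatEps X) :
    ThetaF X ξ ∉ limitPtsOf X ↔ ξ < OmegaO ∧ ξ ∈ JUMPs X := by
  obtain ⟨hξe, hξs⟩ := h
  constructor
  · intro hnl
    by_contra hcon
    apply hnl
    by_cases hΩ : OmegaO ≤ ξ
    · exact lim_ge_Omega hX h0X hΩ hξe
    · push_neg at hΩ
      have hJ : ξ ∉ JUMPs X := fun hj => hcon ⟨hΩ, hj⟩
      exact lim_limit hX h0X hΩ hJ hξs
  · rintro ⟨hΩ, hJ⟩
    rcases hJ with (h0 | hsucc) | hfix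
    · rw [Set.mem_singleton_iff] at h0
      subst h0
      exact notlim_zero hX
    · obtain ⟨ζ, rfl⟩ := hsucc
      exact notlim_succ hX h0X ζ hΩ
    · exact notlim_fix hX h0X hfix hΩ

end
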